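/- Let q ≥ 2, let f : ℕ → {0,1} be a multiplicative q-automatic function, and assume the set {p prime : f(p^e) = 1 for some e ≥ 1} is infinite. Let s₀ be the number of distinct sequences n ↦ f(q^i n + r) over pairs of integers i ≥ 0 and 0 ≤ r < q^i, and let k₀ be a positive integer such that whenever f(q^i n + r) = 0 for all 1 ≤ n ≤ k₀ (for some i ≥ 1, 0 ≤ r < q^i) then f(q^i n + r) = 0 for all n ≥ 1. Then for every integer r > q·k₀² with f(r) = 1 there exist integers A ≥ 0, C with 1 ≤ C ≤ s₀, and m₀ with 1 ≤ m₀ ≤ k₀, such that f(q^{A + Cn} m₀ + r) = 1 for all integers n ≥ 0. -/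

import Mathlib

/-- The `q`-kernel of `f`: the set of sequences `n ↦ f (q^i n + r)` over integers
`i ≥ 1` and `0 ≤ r ≤ q^i - 1`. -/
def qKernel (q : ℕ) (f : ℕ → ℂ) : Set (ℕ → ℂ) :=
  {g | ∃ i r : ℕ, 1 ≤ i ∧ r ≤ q ^ i - 1 ∧ g = fun n => f (q ^ i * n + r)}

/-- `f` is `q`-automatic if its `q`-kernel is finite. -/
def IsQAutomatic (q : ℕ) (f : ℕ → ℂ) : Prop := (qKernel q f).Finite

/-- A multiplicative function with `f 1 = 1` turns products of pairwise coprime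
numbers into products. -/
lemma aux_mult_prod (f : ℕ → ℂ)
    (hmul : ∀ m n : ℕ, Nat.Coprime m n → f (m * n) = f m * f n)
    (hf1 : f 1 = 1) (h : ℕ → ℕ) (t : Finset ℕ)
    (hcop : ∀ i ∈ t, ∀ j ∈ t, i ≠ j → Nat.Coprime (h i) (h j)) :
    f (∏ j ∈ t, h j) = ∏ j ∈ t, f (h j) := by
  classical
  induction t using Finset.induction_on with
  | empty => simpa using hf1
  | @insert a s has ih =>
    rw [Finset.prod_insert has, Finset.prod_insert has,
      hmul _ _ (Nat.Coprime.prod_right fun j hj =>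
        hcop a (Finset.mem_insert_self a s) j (Finset.mem_insert_of_mem hj)
          (fun hh => has (hh ▸ hj))),
      ih (fun i hi j hj hij =>
        hcop i (Finset.mem_insert_of_mem hi) j (Finset.mem_insert_of_mem hj) hij)]

theorem stmt_8 (q : ℕ) (hq : 2 ≤ q) (f : ℕ → ℂ)
    (h01 : ∀ n : ℕ, f n = 0 ∨ f n = 1)
    (hmul : ∀ m n : ℕ, Nat.Coprime m n → f (m * n) = f m * f n)
    (hauto : IsQAutomatic q f)
    (hinf : {p : ℕ | p.Prime ∧ ∃ e : ℕ, 1 ≤ e ∧ f (p ^ e) = 1}.Infinite)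
    (s₀ : ℕ)
    (hs₀ : ({g : ℕ → ℂ | ∃ i r : ℕ, r < q ^ i ∧ g = fun n => f (q ^ i * n + r)}).ncard = s₀)
    (k₀ : ℕ) (hk₀pos : 0 < k₀)
    (hk₀ : ∀ i r : ℕ, 1 ≤ i → r < q ^ i →
      (∀ n : ℕ, 1 ≤ n → n ≤ k₀ → f (q ^ i * n + r) = 0) →
      ∀ n : ℕ, 1 ≤ n → f (q ^ i * n + r) = 0) :
    ∀ r : ℕ, q * k₀ ^ 2 < r → f r = 1 →
      ∃ A C m₀ : ℕ, 1 ≤ C ∧ C ≤ s₀ ∧ 1 ≤ m₀ ∧ m₀ ≤ k₀ ∧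
        ∀ n : ℕ, f (q ^ (A + C * n) * m₀ + r) = 1 := by
  intro r hr hfr
  have hrpos : 1 ≤ r := by omega
  have hf1 : f 1 = 1 := by
    have h := hmul r 1 (Nat.coprime_one_right r)
    rw [mul_one, hfr] at h
    simpa using h.symm
  set A₀ : ℕ := r + 1 with hA₀def
  have hA₀ : r < q ^ A₀ := by
    calc r < 2 ^ r := Nat.lt_two_pow_self (n := r)
    _ ≤ q ^ r := Nat.pow_le_pow_left hq r
    _ ≤ q ^ A₀ := Nat.pow_le_pow_right (by omega) (by omega)
  -- Step 1: for every suitable exponent `A`, some `m₀ ≤ k₀` gives `f (q^A m₀ + r) = 1`.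
  have hexists_m : ∀ A : ℕ, 1 ≤ A → r < q ^ A →
      ∃ m₀ : ℕ, 1 ≤ m₀ ∧ m₀ ≤ k₀ ∧ f (q ^ A * m₀ + r) = 1 := by
    intro A hA hrA
    by_contra hcon
    push_neg at hcon
    have hzero : ∀ n, 1 ≤ n → f (q ^ A * n + r) = 0 := by
      apply hk₀ A r hA hrA
      intro n h1 h2
      rcases h01 (q ^ A * n + r) with h | h
      · exact h
      · exact absurd h (hcon n h1 h2)
    haveI : NeZero (q ^ A) := ⟨pow_ne_zero A (by omega)⟩
    -- infinitely many good primes not dividing `q * r`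
    have hdvdfin : {p : ℕ | p ∣ q * r}.Finite := by
      apply Set.Finite.subset ((q * r).divisors.finite_toSet)
      intro p hp
      simp only [Finset.coe_sort_coe, Finset.mem_coe, Nat.mem_divisors]
      exact ⟨hp, by positivity⟩
    have hinf' : ({p : ℕ | p.Prime ∧ ∃ e : ℕ, 1 ≤ e ∧ f (p ^ e) = 1} \
        {p : ℕ | p ∣ q * r}).Infinite := hinf.diff hdvdfin
    set P : ℕ → ℕ := fun j => (Set.Infinite.natEmbedding _ hinf' j : ℕ) with hPdef
    have hPj : ∀ j, (P j).Prime ∧ (∃ e, 1 ≤ e ∧ f ((P j) ^ e) = 1) ∧ ¬ (P j ∣ q * r) := by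
      intro j
      obtain ⟨⟨h1, h2⟩, h3⟩ := (Set.Infinite.natEmbedding _ hinf' j).2
      exact ⟨h1, h2, h3⟩
    choose E hE1 hE2 using fun j => (hPj j).2.1
    set u : ℕ → ℕ := fun j => P j ^ E j with hudef
    have hPq : ∀ j, ¬ P j ∣ q := fun j h => (hPj j).2.2 (Dvd.dvd.mul_right h r)
    have hPr : ∀ j, ¬ P j ∣ r := fun j h => (hPj j).2.2 (Dvd.dvd.mul_left h q)
    have hcopq : ∀ j, Nat.Coprime (u j) (q ^ A) := fun j =>
      (((hPj j).1.coprime_iff_not_dvd).mpr (hPq j)).pow (E j) A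
    have hcopr : ∀ j, Nat.Coprime r (u j) := fun j =>
      Nat.Coprime.pow_right _ ((((hPj j).1.coprime_iff_not_dvd).mpr (hPr j)).symm)
    -- a collision of prefix products yields a contradiction
    have key : ∀ a b : ℕ, a < b →
        ((∏ j ∈ Finset.range a, u j : ℕ) : ZMod (q ^ A)) =
          ((∏ j ∈ Finset.range b, u j : ℕ) : ZMod (q ^ A)) → False := by
      intro a b hab hcol
      set s : ℕ := ∏ j ∈ Finset.Ico a b, u j with hsdef
      have hsplit : (∏ j ∈ Finset.range a, u j) * s = ∏ j ∈ Finset.range b, u j := by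
        rw [hsdef, Finset.range_eq_Ico, Finset.range_eq_Ico]
        exact Finset.prod_Ico_consecutive u (Nat.zero_le a) (le_of_lt hab)
      have hunit : IsUnit ((∏ j ∈ Finset.range a, u j : ℕ) : ZMod (q ^ A)) := by
        rw [ZMod.isUnit_iff_coprime]
        exact Nat.coprime_prod_left_iff.mpr fun j _ => hcopq j
      have hs1 : (s : ZMod (q ^ A)) = 1 := by
        apply hunit.mul_left_cancel
        calc ((∏ j ∈ Finset.range a, u j : ℕ) : ZMod (q ^ A)) * (s : ZMod (q ^ A))
            = (((∏ j ∈ Finset.range a, u j) * s : ℕ) : ZMod (q ^ A)) := by push_cast; ring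
          _ = ((∏ j ∈ Finset.range b, u j : ℕ) : ZMod (q ^ A)) := by rw [hsplit]
          _ = ((∏ j ∈ Finset.range a, u j : ℕ) : ZMod (q ^ A)) * 1 := by
              rw [mul_one, hcol]
      have hs2 : 2 ≤ s := by
        have hmem : a ∈ Finset.Ico a b := Finset.mem_Ico.mpr ⟨le_refl a, hab⟩
        calc 2 ≤ u a := le_trans (hPj a).1.two_le (Nat.le_self_pow (by have := hE1 a; omega) _)
          _ ≤ s := Finset.single_le_prod'
              (fun j _ => Nat.one_le_pow _ _ (hPj j).1.pos) hmem
      have hmod : s ≡ 1 [MOD q ^ A] := by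
        have := (ZMod.natCast_eq_natCast_iff s 1 (q ^ A)).mp (by rw [Nat.cast_one]; exact hs1)
        exact this
      have hdvd : q ^ A ∣ s - 1 := (Nat.modEq_iff_dvd' (by omega)).mp hmod.symm
      obtain ⟨d, hd⟩ := hdvd
      have hd1 : 1 ≤ d := by
        rcases Nat.eq_zero_or_pos d with h | h
        · rw [h, mul_zero] at hd; omega
        · exact h
      have hs' : s = q ^ A * d + 1 := by omega
      have h1n : 1 ≤ r * d := Nat.mul_pos (by omega) hd1
      have heq : q ^ A * (r * d) + r = r * s := by rw [hs']; ring
      have hfs : f s = 1 := by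
        rw [hsdef, aux_mult_prod f hmul hf1 u _ ?_]
        · exact Finset.prod_eq_one fun j _ => hE2 j
        · intro i _ j _ hij
          exact ((Nat.coprime_primes (hPj i).1 (hPj j).1).mpr
            (fun hh => hij ((Set.Infinite.natEmbedding _ hinf').injective (Subtype.ext hh)))).pow (E i) (E j)
      have hfrs : f (r * s) = 1 := by
        rw [hmul r s (Nat.Coprime.prod_right fun j _ => hcopr j), hfr, hfs, one_mul]
      have := hzero (r * d) h1n
      rw [heq, hfrs] at this
      exact one_ne_zero this
    -- pigeonhole on prefix products
    have hcard : Fintype.card (ZMod (q ^ A)) < Fintype.card (Fin (q ^ A + 1)) := by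
      rw [ZMod.card, Fintype.card_fin]; omega
    obtain ⟨a, b, hab, hfab⟩ := Fintype.exists_ne_map_eq_of_card_lt
      (fun a : Fin (q ^ A + 1) => ((∏ j ∈ Finset.range (a : ℕ), u j : ℕ) : ZMod (q ^ A))) hcard
    have habn : (a : ℕ) ≠ (b : ℕ) := fun h => hab (Fin.ext h)
    rcases lt_or_gt_of_ne habn with h | h
    · exact key a b h hfab
    · exact key b a h hfab.symm
  -- Step 2: the set of kernel-type sequences is finite with at most `s₀` elements.
  set S := {g : ℕ → ℂ | ∃ i r' : ℕ, r' < q ^ i ∧ g = fun n => f (q ^ i * n + r')} with hSdef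
  have hSfin : S.Finite := by
    apply Set.Finite.subset (hauto.union (Set.finite_singleton (fun n => f (q ^ 0 * n + 0))))
    rintro g' ⟨i, r', hr', rfl⟩
    rcases Nat.eq_zero_or_pos i with hi | hi
    · subst hi
      simp only [pow_zero] at hr'
      interval_cases r'
      right
      rfl
    · left
      have h1 : 1 ≤ q ^ i := Nat.one_le_pow _ _ (by omega)
      exact ⟨i, r', hi, by omega, rfl⟩
  -- Step 3: common final argument given a collision in the kernel.
  have final : ∀ a b : ℕ, a < b → b ≤ s₀ →
      (fun n => f (q ^ (A₀ + a) * n + r)) = (fun n => f (q ^ (A₀ + b) * n + r)) →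
      ∃ A C m₀ : ℕ, 1 ≤ C ∧ C ≤ s₀ ∧ 1 ≤ m₀ ∧ m₀ ≤ k₀ ∧
        ∀ n : ℕ, f (q ^ (A + C * n) * m₀ + r) = 1 := by
    intro a b hab hbs hgeq
    set A : ℕ := A₀ + a with hAdef
    set C : ℕ := b - a with hCdef
    have hrA : r < q ^ A := lt_of_lt_of_le hA₀ (Nat.pow_le_pow_right (by omega) (by omega))
    obtain ⟨m₀, hm1, hm2, hm3⟩ := hexists_m A (by omega) hrA
    have hACb : A + C = A₀ + b := by omega
    have hgeq' : (fun m => f (q ^ (A + C) * m + r)) = (fun m => f (q ^ A * m + r)) := by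
      rw [hACb]; exact hgeq.symm
    have hper : ∀ n : ℕ, (fun m => f (q ^ (A + C * n) * m + r)) =
        (fun m => f (q ^ A * m + r)) := by
      intro n
      induction n with
      | zero => simp
      | succ n ih =>
        funext m
        have e1 : A + C * (n + 1) = (A + C * n) + C := by ring
        calc f (q ^ (A + C * (n + 1)) * m + r)
            = f (q ^ (A + C * n) * (q ^ C * m) + r) := by
              rw [e1, pow_add q (A + C * n) C, mul_assoc]
          _ = f (q ^ A * (q ^ C * m) + r) := congrFun ih (q ^ C * m)
          _ = f (q ^ (A + C) * m + r) := by rw [pow_add q A C, mul_assoc]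
          _ = f (q ^ A * m + r) := congrFun hgeq' m
    refine ⟨A, C, m₀, by omega, by omega, hm1, hm2, fun n => ?_⟩
    calc f (q ^ (A + C * n) * m₀ + r) = f (q ^ A * m₀ + r) := congrFun (hper n) m₀
      _ = 1 := hm3
  -- Step 4: pigeonhole among the kernel sequences indexed by `A₀ + i`, `i ≤ s₀`.
  have hmaps : ∀ i ∈ Finset.range (s₀ + 1),
      (fun n => f (q ^ (A₀ + i) * n + r)) ∈ hSfin.toFinset := by
    intro i _
    rw [Set.Finite.mem_toFinset]
    exact ⟨A₀ + i, r, lt_of_lt_of_le hA₀ (Nat.pow_le_pow_right (by omega) (by omega)), rfl⟩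
  have hScard : hSfin.toFinset.card = s₀ := by
    rw [← hs₀, Set.ncard_eq_toFinset_card _ hSfin]
  have hcard2 : hSfin.toFinset.card < (Finset.range (s₀ + 1)).card := by
    rw [Finset.card_range, hScard]; omega
  obtain ⟨a, ha, b, hb, hab, hgab⟩ :=
    Finset.exists_ne_map_eq_of_card_lt_of_maps_to hcard2 hmaps
  rw [Finset.mem_range] at ha hb
  rcases lt_or_gt_of_ne hab with h | h
  · exact final a b h (by omega) hgab
  · exact final b a h (by omega) hgab.symm
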